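/- arXiv:1910.04308 — 4 statements merged into one kernel-verified Lean document; each statement's English description precedes it below -/
import Mathlib

section
/- Let (X, ω_X, μ_X) and (Y, ω_Y, μ_Y) be finite measure networks and μ an optimal coupling achieving the Gromov–Wasserstein distance d(X,Y) = (1/2) dis(μ), where dis(μ)² = ∑_{x,x',y,y'} |ω_X(x,x') − ω_Y(y,y')|² μ(x,y) μ(x',y'). For t ∈ [0,1], define γ(t) = (X × Y, Ω_t, μ) with Ω_t((x,y),(x',y')) = (1−t) ω_X(x,x') + t ω_Y(y,y'). Then for all s, t ∈ [0,1], the Gromov–Wasserstein distance satisfies d(γ(s), γ(t)) = |t − s| · d(X, Y); that is, γ is a geodesic from X to Y in the GW metric. -/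
open Finset

/-- A coupling of the probability vectors `μX` and `μY`: nonnegative entries with
marginals `μX` and `μY`. -/
def IsCoupling {α β : Type*} [Fintype α] [Fintype β]
    (μX : α → ℝ) (μY : β → ℝ) (C : α → β → ℝ) : Prop :=
  (∀ x y, 0 ≤ C x y) ∧ (∀ x, ∑ y, C x y = μX x) ∧ (∀ y, ∑ x, C x y = μY y)

/-- The squared distortion of a coupling `C` between the weight functions `ωX` and `ωY`. -/
def disSq {α β : Type*} [Fintype α] [Fintype β]
    (ωX : α → α → ℝ) (ωY : β → β → ℝ) (C : α → β → ℝ) : ℝ :=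
  ∑ x, ∑ x', ∑ y, ∑ y', (ωX x x' - ωY y y')^2 * C x y * C x' y'

/-- The Gromov–Wasserstein distance between finite measure networks
`(α, ωX, μX)` and `(β, ωY, μY)`. -/
noncomputable def GW {α β : Type*} [Fintype α] [Fintype β]
    (ωX : α → α → ℝ) (μX : α → ℝ) (ωY : β → β → ℝ) (μY : β → ℝ) : ℝ :=
  (1/2) * sInf {r | ∃ C, IsCoupling μX μY C ∧ r = Real.sqrt (disSq ωX ωY C)}

/-! ### Auxiliary sum-permutation lemmas -/

section Swaps

variable {M : Type*} [AddCommMonoid M]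

lemma gwSwap0 {A B : Type*} [Fintype A] [Fintype B] (f : A → B → M) :
    ∑ a, ∑ b, f a b = ∑ b, ∑ a, f a b := Finset.sum_comm

lemma gwSwap1 {A B C : Type*} [Fintype A] [Fintype B] [Fintype C] (f : A → B → C → M) :
    ∑ a, ∑ b, ∑ c, f a b c = ∑ a, ∑ c, ∑ b, f a b c :=
  Finset.sum_congr rfl fun _ _ => Finset.sum_comm

lemma gwSwap2 {A B C D : Type*} [Fintype A] [Fintype B] [Fintype C] [Fintype D]
    (f : A → B → C → D → M) :
    ∑ a, ∑ b, ∑ c, ∑ d, f a b c d = ∑ a, ∑ b, ∑ d, ∑ c, f a b c d :=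
  Finset.sum_congr rfl fun _ _ => gwSwap1 _

lemma gwSwap3 {A B C D E : Type*} [Fintype A] [Fintype B] [Fintype C] [Fintype D] [Fintype E]
    (f : A → B → C → D → E → M) :
    ∑ a, ∑ b, ∑ c, ∑ d, ∑ e, f a b c d e = ∑ a, ∑ b, ∑ c, ∑ e, ∑ d, f a b c d e :=
  Finset.sum_congr rfl fun _ _ => gwSwap2 _

lemma gwSwap4 {A B C D E F : Type*} [Fintype A] [Fintype B] [Fintype C] [Fintype D] [Fintype E]
    [Fintype F] (f : A → B → C → D → E → F → M) :
    ∑ a, ∑ b, ∑ c, ∑ d, ∑ e, ∑ g, f a b c d e g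
      = ∑ a, ∑ b, ∑ c, ∑ d, ∑ g, ∑ e, f a b c d e g :=
  Finset.sum_congr rfl fun _ _ => gwSwap3 _

/-- Block swap for four nested sums. -/
lemma gwPerm4 {A B : Type*} [Fintype A] [Fintype B] (f : A → A → B → B → M) :
    ∑ a, ∑ a', ∑ b, ∑ b', f a a' b b' = ∑ b, ∑ b', ∑ a, ∑ a', f a a' b b' := by
  rw [gwSwap1 fun a a' b => ∑ b', f a a' b b']
  rw [gwSwap0 fun a b => ∑ a', ∑ b', f a a' b b']
  rw [gwSwap2 fun b a a' b' => f a a' b b']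
  rw [gwSwap1 fun b a b' => ∑ a', f a a' b b']

/-- Permutation `(x,x',z,z',w,w') → (x,w,z,x',w',z')`. -/
lemma gwPerm61 {A B C : Type*} [Fintype A] [Fintype B] [Fintype C]
    (f : A → A → C → C → B → B → M) :
    ∑ x, ∑ x', ∑ z, ∑ z', ∑ w, ∑ w', f x x' z z' w w'
      = ∑ x, ∑ w, ∑ z, ∑ x', ∑ w', ∑ z', f x x' z z' w w' := by
  rw [gwSwap3 fun x x' z z' w => ∑ w', f x x' z z' w w']
  rw [gwSwap2 fun x x' z w => ∑ z', ∑ w', f x x' z z' w w']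
  rw [gwSwap1 fun x x' w => ∑ z, ∑ z', ∑ w', f x x' z z' w w']
  rw [gwSwap2 fun x w x' z => ∑ z', ∑ w', f x x' z z' w w']
  rw [gwSwap4 fun x w z x' z' w' => f x x' z z' w w']

/-- Permutation `(x,x',w,w',z,z') → (x,w,z,x',w',z')`. -/
lemma gwPerm62 {A B C : Type*} [Fintype A] [Fintype B] [Fintype C]
    (f : A → A → B → B → C → C → M) :
    ∑ x, ∑ x', ∑ w, ∑ w', ∑ z, ∑ z', f x x' w w' z z'
      = ∑ x, ∑ w, ∑ z, ∑ x', ∑ w', ∑ z', f x x' w w' z z' := by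
  rw [gwSwap1 fun x x' w => ∑ w', ∑ z, ∑ z', f x x' w w' z z']
  rw [gwSwap3 fun x w x' w' z => ∑ z', f x x' w w' z z']
  rw [gwSwap2 fun x w x' z => ∑ w', ∑ z', f x x' w w' z z']

/-- Permutation `(w,w',z,z',x,x') → (x,w,z,x',w',z')`. -/
lemma gwPerm63 {A B C : Type*} [Fintype A] [Fintype B] [Fintype C]
    (f : B → B → C → C → A → A → M) :
    ∑ w, ∑ w', ∑ z, ∑ z', ∑ x, ∑ x', f w w' z z' x x'
      = ∑ x, ∑ w, ∑ z, ∑ x', ∑ w', ∑ z', f w w' z z' x x' := by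
  rw [gwSwap3 fun w w' z z' x => ∑ x', f w w' z z' x x']
  rw [gwSwap2 fun w w' z x => ∑ z', ∑ x', f w w' z z' x x']
  rw [gwSwap1 fun w w' x => ∑ z, ∑ z', ∑ x', f w w' z z' x x']
  rw [gwSwap0 fun w x => ∑ w', ∑ z, ∑ z', ∑ x', f w w' z z' x x']
  rw [gwSwap2 fun x w w' z => ∑ z', ∑ x', f w w' z z' x x']
  rw [gwSwap4 fun x w z w' z' x' => f w w' z z' x x']
  rw [gwSwap3 fun x w z w' x' => ∑ z', f w w' z z' x x']

end Swaps

lemma gw_mul_expand {ι κ : Type*} [Fintype ι] [Fintype κ] (A : ℝ) (f : ι → ℝ) (h : κ → ℝ) :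
    A * (∑ z, f z) * (∑ z', h z') = ∑ z, ∑ z', A * f z * h z' := by
  rw [mul_assoc, Finset.sum_mul_sum, Finset.mul_sum]
  exact Finset.sum_congr rfl fun z _ => by
    rw [Finset.mul_sum]; exact Finset.sum_congr rfl fun z' _ => by ring

/-- Minkowski-type inequality for weighted `ℓ²` sums. -/
lemma gw_minkowski {ι : Type*} [Fintype ι] (u v m : ι → ℝ) (hm : ∀ i, 0 ≤ m i) :
    Real.sqrt (∑ i, (u i + v i)^2 * m i)
      ≤ Real.sqrt (∑ i, (u i)^2 * m i) + Real.sqrt (∑ i, (v i)^2 * m i) := by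
  set a := ∑ i, (u i)^2 * m i with ha_def
  set b := ∑ i, (v i)^2 * m i with hb_def
  set c := ∑ i, u i * v i * m i with hc_def
  have ha : 0 ≤ a := Finset.sum_nonneg fun i _ => mul_nonneg (sq_nonneg _) (hm i)
  have hb : 0 ≤ b := Finset.sum_nonneg fun i _ => mul_nonneg (sq_nonneg _) (hm i)
  have hcs : c^2 ≤ a * b := by
    have h := Finset.sum_mul_sq_le_sq_mul_sq Finset.univ
      (fun i => u i * Real.sqrt (m i)) (fun i => v i * Real.sqrt (m i))
    have h1 : ∑ i, (u i * Real.sqrt (m i)) * (v i * Real.sqrt (m i)) = c :=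
      Finset.sum_congr rfl fun i _ => by
        rw [show (u i * Real.sqrt (m i)) * (v i * Real.sqrt (m i))
            = u i * v i * (Real.sqrt (m i) * Real.sqrt (m i)) from by ring,
          Real.mul_self_sqrt (hm i)]
    have h2 : ∑ i, (u i * Real.sqrt (m i))^2 = a :=
      Finset.sum_congr rfl fun i _ => by rw [mul_pow, Real.sq_sqrt (hm i)]
    have h3 : ∑ i, (v i * Real.sqrt (m i))^2 = b :=
      Finset.sum_congr rfl fun i _ => by rw [mul_pow, Real.sq_sqrt (hm i)]
    rw [h1, h2, h3] at h
    exact h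
  have hc : c ≤ Real.sqrt a * Real.sqrt b := by
    calc c ≤ |c| := le_abs_self _
      _ = Real.sqrt (c^2) := (Real.sqrt_sq_eq_abs c).symm
      _ ≤ Real.sqrt (a * b) := Real.sqrt_le_sqrt hcs
      _ = Real.sqrt a * Real.sqrt b := Real.sqrt_mul ha b
  have expand : ∑ i, (u i + v i)^2 * m i = a + 2*c + b := by
    calc ∑ i, (u i + v i)^2 * m i
        = ∑ i, ((u i)^2 * m i + (2 * (u i * v i * m i) + (v i)^2 * m i)) :=
          Finset.sum_congr rfl fun i _ => by ring
      _ = a + (∑ i, (2 * (u i * v i * m i) + (v i)^2 * m i)) := by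
          rw [Finset.sum_add_distrib]
      _ = a + (2*c + b) := by rw [Finset.sum_add_distrib, ← Finset.mul_sum]
      _ = a + 2*c + b := by ring
  calc Real.sqrt (∑ i, (u i + v i)^2 * m i) = Real.sqrt (a + 2*c + b) := by rw [expand]
    _ ≤ Real.sqrt (a + 2*(Real.sqrt a * Real.sqrt b) + b) := Real.sqrt_le_sqrt (by linarith)
    _ = Real.sqrt ((Real.sqrt a + Real.sqrt b)^2) := by
        rw [show (Real.sqrt a + Real.sqrt b)^2 = a + 2*(Real.sqrt a * Real.sqrt b) + b from by
          rw [add_sq, Real.sq_sqrt ha, Real.sq_sqrt hb]; ring]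
    _ = Real.sqrt a + Real.sqrt b :=
        Real.sqrt_sq (add_nonneg (Real.sqrt_nonneg _) (Real.sqrt_nonneg _))

lemma GW_le {α β : Type*} [Fintype α] [Fintype β]
    (ωX : α → α → ℝ) (μX : α → ℝ) (ωY : β → β → ℝ) (μY : β → ℝ)
    (C : α → β → ℝ) (hC : IsCoupling μX μY C) :
    GW ωX μX ωY μY ≤ (1/2) * Real.sqrt (disSq ωX ωY C) := by
  have hbdd : BddBelow {r | ∃ C, IsCoupling μX μY C ∧ r = Real.sqrt (disSq ωX ωY C)} := by
    refine ⟨0, fun r hr => ?_⟩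
    obtain ⟨C', -, rfl⟩ := hr
    exact Real.sqrt_nonneg _
  have h := csInf_le hbdd (show _ ∈ _ from ⟨C, hC, rfl⟩)
  simp only [GW]
  linarith

lemma disSq_symm {α β : Type*} [Fintype α] [Fintype β]
    (ωX : α → α → ℝ) (ωY : β → β → ℝ) (C : α → β → ℝ) :
    disSq ωY ωX (fun y x => C x y) = disSq ωX ωY C := by
  simp only [disSq]
  rw [gwPerm4 fun y y' x x' => (ωY y y' - ωX x x')^2 * C x y * C x' y']
  refine Finset.sum_congr rfl fun x _ => Finset.sum_congr rfl fun x' _ =>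
    Finset.sum_congr rfl fun y _ => Finset.sum_congr rfl fun y' _ => by ring

lemma GW_symm {α β : Type*} [Fintype α] [Fintype β]
    (ωX : α → α → ℝ) (μX : α → ℝ) (ωY : β → β → ℝ) (μY : β → ℝ) :
    GW ωX μX ωY μY = GW ωY μY ωX μX := by
  have hset : {r | ∃ C, IsCoupling μX μY C ∧ r = Real.sqrt (disSq ωX ωY C)}
      = {r | ∃ C, IsCoupling μY μX C ∧ r = Real.sqrt (disSq ωY ωX C)} := by
    ext r
    simp only [Set.mem_setOf_eq]
    constructor
    · rintro ⟨C, hC, rfl⟩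
      exact ⟨fun y x => C x y, ⟨fun y x => hC.1 x y, hC.2.2, hC.2.1⟩,
        by rw [disSq_symm]⟩
    · rintro ⟨C, hC, rfl⟩
      exact ⟨fun x y => C y x, ⟨fun x y => hC.1 y x, hC.2.2, hC.2.1⟩,
        by rw [disSq_symm ωY ωX C]⟩
  simp only [GW, hset]

/-- Triangle inequality for GW, via gluing of couplings. -/
lemma GW_triangle {α β γ : Type*} [Fintype α] [Fintype β] [Fintype γ]
    (ωX : α → α → ℝ) (μX : α → ℝ) (ωW : β → β → ℝ) (μW : β → ℝ)
    (ωZ : γ → γ → ℝ) (μZ : γ → ℝ)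
    (hX0 : ∀ x, 0 ≤ μX x) (hX1 : ∑ x, μX x = 1)
    (hW0 : ∀ w, 0 ≤ μW w) (hW1 : ∑ w, μW w = 1)
    (hZ0 : ∀ z, 0 ≤ μZ z) (hZ1 : ∑ z, μZ z = 1) :
    GW ωX μX ωZ μZ ≤ GW ωX μX ωW μW + GW ωW μW ωZ μZ := by
  classical
  refine le_of_forall_pos_le_add fun ε hε => ?_
  have hS1ne : {r | ∃ C, IsCoupling μX μW C ∧ r = Real.sqrt (disSq ωX ωW C)}.Nonempty :=
    ⟨_, ⟨fun x w => μX x * μW w, ⟨fun x w => mul_nonneg (hX0 x) (hW0 w),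
      fun x => by rw [← Finset.mul_sum, hW1, mul_one],
      fun w => by rw [← Finset.sum_mul, hX1, one_mul]⟩, rfl⟩⟩
  have hS2ne : {r | ∃ C, IsCoupling μW μZ C ∧ r = Real.sqrt (disSq ωW ωZ C)}.Nonempty :=
    ⟨_, ⟨fun w z => μW w * μZ z, ⟨fun w z => mul_nonneg (hW0 w) (hZ0 z),
      fun w => by rw [← Finset.mul_sum, hZ1, mul_one],
      fun z => by rw [← Finset.sum_mul, hW1, one_mul]⟩, rfl⟩⟩
  obtain ⟨r1, hr1mem, hr1⟩ := Real.lt_sInf_add_pos hS1ne hε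
  obtain ⟨C1, hC1, rfl⟩ := hr1mem
  obtain ⟨r2, hr2mem, hr2⟩ := Real.lt_sInf_add_pos hS2ne hε
  obtain ⟨C2, hC2, rfl⟩ := hr2mem
  -- glue the couplings
  obtain ⟨g, hg0, hgz, hgx⟩ : ∃ g : α → β → γ → ℝ, (∀ x w z, 0 ≤ g x w z) ∧
      (∀ x w, ∑ z, g x w z = C1 x w) ∧ (∀ w z, ∑ x, g x w z = C2 w z) := by
    refine ⟨fun x w z => if μW w = 0 then 0 else C1 x w * C2 w z / μW w,
      fun x w z => ?_, fun x w => ?_, fun w z => ?_⟩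
    · dsimp only
      split
      · exact le_rfl
      · exact div_nonneg (mul_nonneg (hC1.1 x w) (hC2.1 w z)) (hW0 w)
    · by_cases h : μW w = 0
      · have hs : ∑ x', C1 x' w = 0 := by rw [hC1.2.2 w, h]
        have hx0 : C1 x w = 0 :=
          (Finset.sum_eq_zero_iff_of_nonneg (fun i _ => hC1.1 i w)).mp hs x (Finset.mem_univ x)
        simp [h, hx0]
      · simp only [if_neg h]
        rw [← Finset.sum_div, ← Finset.mul_sum, hC2.2.1 w, mul_div_assoc, div_self h, mul_one]
    · by_cases h : μW w = 0
      · have hs : ∑ z', C2 w z' = 0 := by rw [hC2.2.1 w, h]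
        have hz0 : C2 w z = 0 :=
          (Finset.sum_eq_zero_iff_of_nonneg (fun i _ => hC2.1 w i)).mp hs z (Finset.mem_univ z)
        simp [h, hz0]
      · simp only [if_neg h]
        rw [← Finset.sum_div, ← Finset.sum_mul, hC1.2.2 w, mul_comm, mul_div_assoc,
          div_self h, mul_one]
  have hCglue : IsCoupling μX μZ (fun x z => ∑ w, g x w z) := by
    refine ⟨fun x z => Finset.sum_nonneg fun w _ => hg0 x w z, fun x => ?_, fun z => ?_⟩
    · calc ∑ z, ∑ w, g x w z = ∑ w, ∑ z, g x w z := Finset.sum_comm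
        _ = ∑ w, C1 x w := Finset.sum_congr rfl fun w _ => hgz x w
        _ = μX x := hC1.2.1 x
    · calc ∑ x, ∑ w, g x w z = ∑ w, ∑ x, g x w z := Finset.sum_comm
        _ = ∑ w, C2 w z := Finset.sum_congr rfl fun w _ => hgx w z
        _ = μZ z := hC2.2.2 z
  have e1 : disSq ωX ωZ (fun x z => ∑ w, g x w z)
      = ∑ r : (α × β × γ) × (α × β × γ),
          ((ωX r.1.1 r.2.1 - ωW r.1.2.1 r.2.2.1) + (ωW r.1.2.1 r.2.2.1 - ωZ r.1.2.2 r.2.2.2))^2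
            * (g r.1.1 r.1.2.1 r.1.2.2 * g r.2.1 r.2.2.1 r.2.2.2) := by
    simp only [disSq]
    calc ∑ x, ∑ x', ∑ z, ∑ z', (ωX x x' - ωZ z z')^2 * (∑ w, g x w z) * (∑ w', g x' w' z')
        = ∑ x, ∑ x', ∑ z, ∑ z', ∑ w, ∑ w', (ωX x x' - ωZ z z')^2 * g x w z * g x' w' z' :=
          Finset.sum_congr rfl fun x _ => Finset.sum_congr rfl fun x' _ =>
            Finset.sum_congr rfl fun z _ => Finset.sum_congr rfl fun z' _ =>
              gw_mul_expand _ _ _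
      _ = ∑ x, ∑ w, ∑ z, ∑ x', ∑ w', ∑ z', (ωX x x' - ωZ z z')^2 * g x w z * g x' w' z' :=
          gwPerm61 fun x x' z z' w w' => (ωX x x' - ωZ z z')^2 * g x w z * g x' w' z'
      _ = _ := by simp [Fintype.sum_prod_type, sub_add_sub_cancel, mul_assoc]
  have e2 : disSq ωX ωW C1
      = ∑ r : (α × β × γ) × (α × β × γ),
          (ωX r.1.1 r.2.1 - ωW r.1.2.1 r.2.2.1)^2
            * (g r.1.1 r.1.2.1 r.1.2.2 * g r.2.1 r.2.2.1 r.2.2.2) := by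
    simp only [disSq]
    calc ∑ x, ∑ x', ∑ w, ∑ w', (ωX x x' - ωW w w')^2 * C1 x w * C1 x' w'
        = ∑ x, ∑ x', ∑ w, ∑ w', (ωX x x' - ωW w w')^2 * (∑ z, g x w z) * (∑ z', g x' w' z') := by
          simp only [hgz]
      _ = ∑ x, ∑ x', ∑ w, ∑ w', ∑ z, ∑ z', (ωX x x' - ωW w w')^2 * g x w z * g x' w' z' :=
          Finset.sum_congr rfl fun x _ => Finset.sum_congr rfl fun x' _ =>
            Finset.sum_congr rfl fun w _ => Finset.sum_congr rfl fun w' _ =>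
              gw_mul_expand _ _ _
      _ = ∑ x, ∑ w, ∑ z, ∑ x', ∑ w', ∑ z', (ωX x x' - ωW w w')^2 * g x w z * g x' w' z' :=
          gwPerm62 fun x x' w w' z z' => (ωX x x' - ωW w w')^2 * g x w z * g x' w' z'
      _ = _ := by simp [Fintype.sum_prod_type, mul_assoc]
  have e3 : disSq ωW ωZ C2
      = ∑ r : (α × β × γ) × (α × β × γ),
          (ωW r.1.2.1 r.2.2.1 - ωZ r.1.2.2 r.2.2.2)^2
            * (g r.1.1 r.1.2.1 r.1.2.2 * g r.2.1 r.2.2.1 r.2.2.2) := by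
    simp only [disSq]
    calc ∑ w, ∑ w', ∑ z, ∑ z', (ωW w w' - ωZ z z')^2 * C2 w z * C2 w' z'
        = ∑ w, ∑ w', ∑ z, ∑ z', (ωW w w' - ωZ z z')^2 * (∑ x, g x w z) * (∑ x', g x' w' z') := by
          simp only [hgx]
      _ = ∑ w, ∑ w', ∑ z, ∑ z', ∑ x, ∑ x', (ωW w w' - ωZ z z')^2 * g x w z * g x' w' z' :=
          Finset.sum_congr rfl fun w _ => Finset.sum_congr rfl fun w' _ =>
            Finset.sum_congr rfl fun z _ => Finset.sum_congr rfl fun z' _ =>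
              gw_mul_expand _ _ _
      _ = ∑ x, ∑ w, ∑ z, ∑ x', ∑ w', ∑ z', (ωW w w' - ωZ z z')^2 * g x w z * g x' w' z' :=
          gwPerm63 fun w w' z z' x x' => (ωW w w' - ωZ z z')^2 * g x w z * g x' w' z'
      _ = _ := by simp [Fintype.sum_prod_type, mul_assoc]
  have key : Real.sqrt (disSq ωX ωZ (fun x z => ∑ w, g x w z))
      ≤ Real.sqrt (disSq ωX ωW C1) + Real.sqrt (disSq ωW ωZ C2) := by
    rw [e1, e2, e3]
    exact gw_minkowski
      (fun r : (α × β × γ) × (α × β × γ) => ωX r.1.1 r.2.1 - ωW r.1.2.1 r.2.2.1)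
      (fun r => ωW r.1.2.1 r.2.2.1 - ωZ r.1.2.2 r.2.2.2)
      (fun r => g r.1.1 r.1.2.1 r.1.2.2 * g r.2.1 r.2.2.1 r.2.2.2)
      (fun r => mul_nonneg (hg0 _ _ _) (hg0 _ _ _))
  have hb := GW_le ωX μX ωZ μZ _ hCglue
  have hGW1 : GW ωX μX ωW μW
      = (1/2) * sInf {r | ∃ C, IsCoupling μX μW C ∧ r = Real.sqrt (disSq ωX ωW C)} := rfl
  have hGW2 : GW ωW μW ωZ μZ
      = (1/2) * sInf {r | ∃ C, IsCoupling μW μZ C ∧ r = Real.sqrt (disSq ωW ωZ C)} := rfl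
  rw [hGW1, hGW2]
  linarith

lemma gw_geodesic_aux {α β : Type*} [Fintype α] [Fintype β]
    (ωX : α → α → ℝ) (μX : α → ℝ) (ωY : β → β → ℝ) (μY : β → ℝ)
    (hμX0 : ∀ x, 0 ≤ μX x) (hμX1 : ∑ x, μX x = 1)
    (hμY0 : ∀ y, 0 ≤ μY y) (hμY1 : ∑ y, μY y = 1)
    (μ : α → β → ℝ) (hμ : IsCoupling μX μY μ)
    (hopt : GW ωX μX ωY μY = (1/2) * Real.sqrt (disSq ωX ωY μ))
    (s t : ℝ) (hs0 : 0 ≤ s) (ht1 : t ≤ 1) (hst : s ≤ t) :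
    GW (fun p q : α × β => (1 - s) * ωX p.1 q.1 + s * ωY p.2 q.2)
        (fun p : α × β => μ p.1 p.2)
        (fun p q : α × β => (1 - t) * ωX p.1 q.1 + t * ωY p.2 q.2)
        (fun p : α × β => μ p.1 p.2)
      = (t - s) * GW ωX μX ωY μY := by
  classical
  have hν0 : ∀ p : α × β, 0 ≤ μ p.1 p.2 := fun p => hμ.1 _ _
  have hν1 : ∑ p : α × β, μ p.1 p.2 = 1 := by
    rw [Fintype.sum_prod_type]
    simp [hμ.2.1, hμX1]
  -- the diagonal coupling between γ(s) and γ(t)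
  have hD : IsCoupling (fun p : α × β => μ p.1 p.2) (fun p : α × β => μ p.1 p.2)
      (fun p q : α × β => if p = q then μ p.1 p.2 else 0) := by
    refine ⟨fun p q => ?_, fun p => ?_, fun q => ?_⟩
    · dsimp only; split
      · exact hμ.1 _ _
      · exact le_rfl
    · simp [Finset.sum_ite_eq]
    · simp [Finset.sum_ite_eq']
  have hdisD : disSq (fun p q : α × β => (1 - s) * ωX p.1 q.1 + s * ωY p.2 q.2)
      (fun p q : α × β => (1 - t) * ωX p.1 q.1 + t * ωY p.2 q.2)
      (fun p q : α × β => if p = q then μ p.1 p.2 else 0)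
      = (t - s)^2 * disSq ωX ωY μ := by
    simp only [disSq]
    simp only [mul_ite, ite_mul, mul_zero, zero_mul, Finset.sum_ite_eq, Finset.mem_univ,
      ite_true]
    simp only [Fintype.sum_prod_type]
    rw [gwSwap1 fun x x' y => ∑ y', (ωX x x' - ωY y y')^2 * μ x y * μ x' y']
    simp only [Finset.mul_sum]
    refine Finset.sum_congr rfl fun a _ => Finset.sum_congr rfl fun b _ =>
      Finset.sum_congr rfl fun a' _ => Finset.sum_congr rfl fun b' _ => by ring
  -- the coupling between X and γ(s)
  have hE : IsCoupling μX (fun p : α × β => μ p.1 p.2)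
      (fun x (p : α × β) => if x = p.1 then μ p.1 p.2 else 0) := by
    refine ⟨fun x p => ?_, fun x => ?_, fun p => ?_⟩
    · dsimp only; split
      · exact hμ.1 _ _
      · exact le_rfl
    · have hrow : ∀ a : α, ∑ b : β, (if x = a then μ a b else 0)
          = if x = a then μX a else 0 := fun a => by
        split <;> simp [hμ.2.1 a]
      calc ∑ p : α × β, (if x = p.1 then μ p.1 p.2 else 0)
          = ∑ a, ∑ b, (if x = a then μ a b else 0) := Fintype.sum_prod_type _
        _ = ∑ a, (if x = a then μX a else 0) := Finset.sum_congr rfl fun a _ => hrow a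
        _ = μX x := by simp
    · simp [Finset.sum_ite_eq']
  have hdisE : disSq ωX (fun p q : α × β => (1 - s) * ωX p.1 q.1 + s * ωY p.2 q.2)
      (fun x (p : α × β) => if x = p.1 then μ p.1 p.2 else 0)
      = s^2 * disSq ωX ωY μ := by
    simp only [disSq]
    rw [gwPerm4 fun (x x' : α) (p p' : α × β) =>
      (ωX x x' - ((1 - s) * ωX p.1 p'.1 + s * ωY p.2 p'.2))^2
        * (if x = p.1 then μ p.1 p.2 else 0) * (if x' = p'.1 then μ p'.1 p'.2 else 0)]
    simp only [mul_ite, ite_mul, mul_zero, zero_mul, Finset.sum_ite_eq', Finset.mem_univ,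
      ite_true]
    simp only [Fintype.sum_prod_type]
    rw [gwSwap1 fun x x' y => ∑ y', (ωX x x' - ωY y y')^2 * μ x y * μ x' y']
    simp only [Finset.mul_sum]
    refine Finset.sum_congr rfl fun a _ => Finset.sum_congr rfl fun b _ =>
      Finset.sum_congr rfl fun a' _ => Finset.sum_congr rfl fun b' _ => by ring
  -- the coupling between γ(t) and Y
  have hF : IsCoupling (fun p : α × β => μ p.1 p.2) μY
      (fun (p : α × β) y => if y = p.2 then μ p.1 p.2 else 0) := by
    refine ⟨fun p y => ?_, fun p => ?_, fun y => ?_⟩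
    · dsimp only; split
      · exact hμ.1 _ _
      · exact le_rfl
    · simp [Finset.sum_ite_eq']
    · calc ∑ p : α × β, (if y = p.2 then μ p.1 p.2 else 0)
          = ∑ a, ∑ b, (if y = b then μ a b else 0) := Fintype.sum_prod_type _
        _ = ∑ a, μ a y := Finset.sum_congr rfl fun a _ => by simp [Finset.sum_ite_eq]
        _ = μY y := hμ.2.2 y
  have hdisF : disSq (fun p q : α × β => (1 - t) * ωX p.1 q.1 + t * ωY p.2 q.2) ωY
      (fun (p : α × β) y => if y = p.2 then μ p.1 p.2 else 0)
      = (1 - t)^2 * disSq ωX ωY μ := by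
    simp only [disSq]
    simp only [mul_ite, ite_mul, mul_zero, zero_mul, Finset.sum_ite_eq', Finset.mem_univ,
      ite_true]
    simp only [Fintype.sum_prod_type]
    rw [gwSwap1 fun x x' y => ∑ y', (ωX x x' - ωY y y')^2 * μ x y * μ x' y']
    simp only [Finset.mul_sum]
    refine Finset.sum_congr rfl fun a _ => Finset.sum_congr rfl fun b _ =>
      Finset.sum_congr rfl fun a' _ => Finset.sum_congr rfl fun b' _ => by ring
  -- upper bound
  have up : GW (fun p q : α × β => (1 - s) * ωX p.1 q.1 + s * ωY p.2 q.2)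
      (fun p : α × β => μ p.1 p.2)
      (fun p q : α × β => (1 - t) * ωX p.1 q.1 + t * ωY p.2 q.2)
      (fun p : α × β => μ p.1 p.2) ≤ (t - s) * GW ωX μX ωY μY := by
    have h := GW_le (fun p q : α × β => (1 - s) * ωX p.1 q.1 + s * ωY p.2 q.2)
      (fun p : α × β => μ p.1 p.2)
      (fun p q : α × β => (1 - t) * ωX p.1 q.1 + t * ωY p.2 q.2)
      (fun p : α × β => μ p.1 p.2) _ hD
    rw [hdisD, Real.sqrt_mul (sq_nonneg _), Real.sqrt_sq (by linarith : (0:ℝ) ≤ t - s)] at h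
    rw [hopt]
    linarith
  have bX : GW ωX μX (fun p q : α × β => (1 - s) * ωX p.1 q.1 + s * ωY p.2 q.2)
      (fun p : α × β => μ p.1 p.2) ≤ s * GW ωX μX ωY μY := by
    have h := GW_le ωX μX (fun p q : α × β => (1 - s) * ωX p.1 q.1 + s * ωY p.2 q.2)
      (fun p : α × β => μ p.1 p.2) _ hE
    rw [hdisE, Real.sqrt_mul (sq_nonneg _), Real.sqrt_sq hs0] at h
    rw [hopt]
    linarith
  have bY : GW (fun p q : α × β => (1 - t) * ωX p.1 q.1 + t * ωY p.2 q.2)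
      (fun p : α × β => μ p.1 p.2) ωY μY ≤ (1 - t) * GW ωX μX ωY μY := by
    have h := GW_le (fun p q : α × β => (1 - t) * ωX p.1 q.1 + t * ωY p.2 q.2)
      (fun p : α × β => μ p.1 p.2) ωY μY _ hF
    rw [hdisF, Real.sqrt_mul (sq_nonneg _), Real.sqrt_sq (by linarith : (0:ℝ) ≤ 1 - t)] at h
    rw [hopt]
    linarith
  have tri1 := GW_triangle ωX μX
    (fun p q : α × β => (1 - s) * ωX p.1 q.1 + s * ωY p.2 q.2) (fun p : α × β => μ p.1 p.2)
    ωY μY hμX0 hμX1 hν0 hν1 hμY0 hμY1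
  have tri2 := GW_triangle
    (fun p q : α × β => (1 - s) * ωX p.1 q.1 + s * ωY p.2 q.2) (fun p : α × β => μ p.1 p.2)
    (fun p q : α × β => (1 - t) * ωX p.1 q.1 + t * ωY p.2 q.2) (fun p : α × β => μ p.1 p.2)
    ωY μY hν0 hν1 hν0 hν1 hμY0 hμY1
  exact le_antisymm up (by linarith)

/-- If `μ` is an optimal coupling between finite measure networks
`(α, ωX, μX)` and `(β, ωY, μY)`, then the path
`γ(t) = (α × β, Ω_t, μ)` with `Ω_t((x,y),(x',y')) = (1−t) ωX(x,x') + t ωY(y,y')`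
satisfies `d(γ(s), γ(t)) = |t − s| · d(X,Y)` for all `s, t ∈ [0,1]`: it is a geodesic. -/
theorem gw_geodesic {α β : Type*} [Fintype α] [Fintype β]
    (ωX : α → α → ℝ) (μX : α → ℝ) (ωY : β → β → ℝ) (μY : β → ℝ)
    (hμX0 : ∀ x, 0 < μX x) (hμX1 : ∑ x, μX x = 1)
    (hμY0 : ∀ y, 0 < μY y) (hμY1 : ∑ y, μY y = 1)
    (μ : α → β → ℝ) (hμ : IsCoupling μX μY μ)
    (hopt : GW ωX μX ωY μY = (1/2) * Real.sqrt (disSq ωX ωY μ)) :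
    ∀ s t : ℝ, s ∈ Set.Icc (0:ℝ) 1 → t ∈ Set.Icc (0:ℝ) 1 →
      GW (fun p q : α × β => (1 - s) * ωX p.1 q.1 + s * ωY p.2 q.2)
          (fun p : α × β => μ p.1 p.2)
          (fun p q : α × β => (1 - t) * ωX p.1 q.1 + t * ωY p.2 q.2)
          (fun p : α × β => μ p.1 p.2)
        = |t - s| * GW ωX μX ωY μY := by
  intro s t hs ht
  rcases le_total s t with h | h
  · rw [abs_of_nonneg (by linarith : (0:ℝ) ≤ t - s)]
    exact gw_geodesic_aux ωX μX ωY μY (fun x => (hμX0 x).le) hμX1 (fun y => (hμY0 y).le)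
      hμY1 μ hμ hopt s t hs.1 ht.2 h
  · rw [GW_symm (fun p q : α × β => (1 - s) * ωX p.1 q.1 + s * ωY p.2 q.2)
      (fun p : α × β => μ p.1 p.2)
      (fun p q : α × β => (1 - t) * ωX p.1 q.1 + t * ωY p.2 q.2)
      (fun p : α × β => μ p.1 p.2)]
    rw [abs_of_nonpos (by linarith : t - s ≤ 0)]
    rw [gw_geodesic_aux ωX μX ωY μY (fun x => (hμX0 x).le) hμX1 (fun y => (hμY0 y).le)
      hμY1 μ hμ hopt t s ht.1 hs.2 h]
    ring
end

section
/- Let (X, ω_X, μ_X) and (Y, ω_Y, μ_Y) be finite measure networks, μ an optimal coupling, and γ(t) = (X × Y, (1−t) ω_X + t ω_Y, μ) the interpolation path. Then for s, t ∈ [0,1], d(γ(s), γ(t)) ≤ |t − s| · d(X, Y), where d is the Gromov–Wasserstein distance. (Upper bound half of the geodesic property: the coupling induced by the diagonal on (X×Y)² yields distortion |t−s| dis(μ).) -/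
open Finset

/-- Upper bound half of the geodesic property: with `μ` an optimal coupling
and `γ(t) = (α × β, (1−t) ωX + t ωY, μ)`, for `s, t ∈ [0,1]` one has
`d(γ(s), γ(t)) ≤ |t − s| · d(X, Y)`. -/
theorem gw_geodesic_upper_bound {α β : Type*} [Fintype α] [Fintype β]
    (ωX : α → α → ℝ) (μX : α → ℝ) (ωY : β → β → ℝ) (μY : β → ℝ)
    (hμX0 : ∀ x, 0 < μX x) (hμX1 : ∑ x, μX x = 1)
    (hμY0 : ∀ y, 0 < μY y) (hμY1 : ∑ y, μY y = 1)
    (μ : α → β → ℝ) (hμ : IsCoupling μX μY μ)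
    (hopt : GW ωX μX ωY μY = (1/2) * Real.sqrt (disSq ωX ωY μ)) :
    ∀ s t : ℝ, s ∈ Set.Icc (0:ℝ) 1 → t ∈ Set.Icc (0:ℝ) 1 →
      GW (fun p q : α × β => (1 - s) * ωX p.1 q.1 + s * ωY p.2 q.2)
          (fun p : α × β => μ p.1 p.2)
          (fun p q : α × β => (1 - t) * ωX p.1 q.1 + t * ωY p.2 q.2)
          (fun p : α × β => μ p.1 p.2)
        ≤ |t - s| * GW ωX μX ωY μY := by
  intro s t hs ht
  classical
  set D := disSq ωX ωY μ with hD
  have hμnn : ∀ x y, 0 ≤ μ x y := hμ.1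
  -- the diagonal coupling
  set C : α × β → α × β → ℝ := fun p q => if q = p then μ p.1 p.2 else 0 with hCdef
  have hcoup : IsCoupling (fun p : α × β => μ p.1 p.2) (fun p : α × β => μ p.1 p.2) C := by
    refine ⟨?_, ?_, ?_⟩
    · intro p q
      by_cases h : q = p <;> simp [hCdef, h, hμnn]
    · intro p; simp [hCdef]
    · intro q
      have : ∀ p : α × β, C p q = if p = q then μ q.1 q.2 else 0 := by
        intro p
        by_cases h : p = q <;> simp [hCdef, h, eq_comm]
      simp [this]
  set ωs : α × β → α × β → ℝ := fun p q => (1 - s) * ωX p.1 q.1 + s * ωY p.2 q.2 with hωs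
  set ωt : α × β → α × β → ℝ := fun p q => (1 - t) * ωX p.1 q.1 + t * ωY p.2 q.2 with hωt
  have hDnn : 0 ≤ D := by
    rw [hD]
    apply Finset.sum_nonneg; intro x _
    apply Finset.sum_nonneg; intro x' _
    apply Finset.sum_nonneg; intro y _
    apply Finset.sum_nonneg; intro y' _
    have := hμnn x y
    have := hμnn x' y'
    positivity
  have hdis : disSq ωs ωt C = (t - s)^2 * D := by
    have step1 : disSq ωs ωt C
        = ∑ p : α × β, ∑ p' : α × β, (ωs p p' - ωt p p')^2 * μ p.1 p.2 * μ p'.1 p'.2 := by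
      unfold disSq
      refine Finset.sum_congr rfl fun p _ => Finset.sum_congr rfl fun p' _ => ?_
      simp [hCdef, mul_ite, ite_mul, Finset.sum_ite_eq']
    have step2 : ∀ p p' : α × β,
        (ωs p p' - ωt p p')^2 = (t - s)^2 * (ωX p.1 p'.1 - ωY p.2 p'.2)^2 := by
      intro p p'
      simp only [hωs, hωt]
      ring
    rw [step1]
    have step3 : ∑ p : α × β, ∑ p' : α × β,
        (ωX p.1 p'.1 - ωY p.2 p'.2)^2 * μ p.1 p.2 * μ p'.1 p'.2 = D := by
      rw [hD]
      unfold disSq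
      simp only [Fintype.sum_prod_type]
      refine Finset.sum_congr rfl fun x _ => ?_
      rw [Finset.sum_comm]
    calc ∑ p : α × β, ∑ p' : α × β, (ωs p p' - ωt p p')^2 * μ p.1 p.2 * μ p'.1 p'.2
        = (t - s)^2 * ∑ p : α × β, ∑ p' : α × β,
            (ωX p.1 p'.1 - ωY p.2 p'.2)^2 * μ p.1 p.2 * μ p'.1 p'.2 := by
          rw [Finset.mul_sum]
          refine Finset.sum_congr rfl fun p _ => ?_
          rw [Finset.mul_sum]
          refine Finset.sum_congr rfl fun p' _ => ?_
          rw [step2]; ring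
      _ = (t - s)^2 * D := by rw [step3]
  -- bound the GW distance by the diagonal coupling
  have hsqrt : Real.sqrt (disSq ωs ωt C) = |t - s| * Real.sqrt D := by
    rw [hdis, Real.sqrt_mul (sq_nonneg _), Real.sqrt_sq_eq_abs]
  set S := {r | ∃ C', IsCoupling (fun p : α × β => μ p.1 p.2) (fun p : α × β => μ p.1 p.2) C' ∧
      r = Real.sqrt (disSq ωs ωt C')} with hS
  have hmem : Real.sqrt (disSq ωs ωt C) ∈ S := ⟨C, hcoup, rfl⟩
  have hbdd : BddBelow S := by
    refine ⟨0, ?_⟩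
    rintro r ⟨C', _, rfl⟩
    exact Real.sqrt_nonneg _
  have hle : sInf S ≤ Real.sqrt (disSq ωs ωt C) := csInf_le hbdd hmem
  have : GW ωs (fun p : α × β => μ p.1 p.2) ωt (fun p : α × β => μ p.1 p.2)
      ≤ (1/2) * (|t - s| * Real.sqrt D) := by
    unfold GW
    rw [← hsqrt]
    have h2 : (0:ℝ) ≤ 1/2 := by norm_num
    exact mul_le_mul_of_nonneg_left hle h2
  calc GW ωs (fun p : α × β => μ p.1 p.2) ωt (fun p : α × β => μ p.1 p.2)
      ≤ (1/2) * (|t - s| * Real.sqrt D) := this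
    _ = |t - s| * ((1/2) * Real.sqrt D) := by ring
    _ = |t - s| * GW ωX μX ωY μY := by rw [hopt]
end

section
/- Let (Z, ω_Z, μ_Z) be a finite measure network and f : Z × Z → ℝ. Let Z₁ = (Z, ω_Z + f, μ_Z), let Δ be the diagonal coupling, and let μ be any coupling of μ_Z with itself. If for all quadruples z₁,z₂,z₃,z₄ either ω_Z(z₁,z₂) = ω_Z(z₃,z₄) or |ω_Z(z₁,z₂) − ω_Z(z₃,z₄)| ≥ 2 sup_{z,z'} |f(z,z')|, then dis(Δ) ≤ dis(μ), where the distortion is computed between Z and Z₁. Hence the diagonal coupling is optimal between Z and Z₁. -/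
open Finset

/-- Let `(Z, ωZ, μZ)` be a finite measure network, `f : Z × Z → ℝ`, and
`Z₁ = (Z, ωZ + f, μZ)`. If for every quadruple either `ωZ(z₁,z₂) = ωZ(z₃,z₄)` or
`|ωZ(z₁,z₂) − ωZ(z₃,z₄)| ≥ 2 sup |f|`, then for any coupling `μ` of `μZ` with itself
the distortion of the diagonal coupling `Δ` (between `Z` and `Z₁`) is at most that of `μ`:
`dis(Δ) ≤ dis(μ)`. -/
theorem diagonal_coupling_optimal {Z : Type*} [Fintype Z]
    (ωZ : Z → Z → ℝ) (μZ : Z → ℝ)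
    (hμ0 : ∀ z, 0 < μZ z) (hμ1 : ∑ z, μZ z = 1)
    (f : Z → Z → ℝ)
    (μ : Z → Z → ℝ)
    (hμpos : ∀ z z', 0 ≤ μ z z')
    (hrow : ∀ z, ∑ z', μ z z' = μZ z)
    (hcol : ∀ z', ∑ z, μ z z' = μZ z')
    (hgap : ∀ z₁ z₂ z₃ z₄, ωZ z₁ z₂ = ωZ z₃ z₄ ∨
      ∀ z z', 2 * |f z z'| ≤ |ωZ z₁ z₂ - ωZ z₃ z₄|) :
    Real.sqrt (∑ z, ∑ z', (f z z')^2 * μZ z * μZ z')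
      ≤ Real.sqrt (∑ z₁, ∑ z₂, ∑ z₃, ∑ z₄,
          (ωZ z₁ z₂ + f z₁ z₂ - ωZ z₃ z₄)^2 * μ z₁ z₃ * μ z₂ z₄) := by
  apply Real.sqrt_le_sqrt
  apply Finset.sum_le_sum; intro z₁ _
  apply Finset.sum_le_sum; intro z₂ _
  have key : ∀ z₃ z₄, (f z₁ z₂)^2 ≤ (ωZ z₁ z₂ + f z₁ z₂ - ωZ z₃ z₄)^2 := by
    intro z₃ z₄
    rcases hgap z₁ z₂ z₃ z₄ with h | h
    · rw [h]; ring_nf; nlinarith [sq_nonneg (f z₁ z₂)]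
    · have h2 := h z₁ z₂
      nlinarith [sq_abs (ωZ z₁ z₂ - ωZ z₃ z₄), sq_abs (f z₁ z₂),
        abs_nonneg (f z₁ z₂), abs_nonneg (ωZ z₁ z₂ - ωZ z₃ z₄),
        neg_abs_le ((ωZ z₁ z₂ - ωZ z₃ z₄) * f z₁ z₂),
        abs_mul (ωZ z₁ z₂ - ωZ z₃ z₄) (f z₁ z₂)]
  have expand : (f z₁ z₂)^2 * μZ z₁ * μZ z₂
      = ∑ z₃, ∑ z₄, (f z₁ z₂)^2 * μ z₁ z₃ * μ z₂ z₄ := by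
    rw [← hrow z₁, ← hrow z₂]
    simp only [Finset.mul_sum, Finset.sum_mul]
    rw [Finset.sum_comm]
  rw [expand]
  apply Finset.sum_le_sum; intro z₃ _
  apply Finset.sum_le_sum; intro z₄ _
  have := mul_nonneg (hμpos z₁ z₃) (hμpos z₂ z₄)
  nlinarith [key z₃ z₄, hμpos z₁ z₃, hμpos z₂ z₄]
end

section
/- The Gromov–Wasserstein distance on finite measure networks satisfies the triangle inequality: for finite measure networks X, Y, Z, d(X, Z) ≤ d(X, Y) + d(Y, Z), where d(X,Y) = (1/2) min over couplings μ of (∑_{x,x',y,y'} (ω_X(x,x') − ω_Y(y,y'))² μ(x,y) μ(x',y'))^{1/2}. -/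
open Finset

lemma minkowski_sq {ι : Type*} [Fintype ι] (f g w : ι → ℝ) (hw : ∀ i, 0 ≤ w i) :
    Real.sqrt (∑ i, (f i + g i)^2 * w i) ≤
      Real.sqrt (∑ i, (f i)^2 * w i) + Real.sqrt (∑ i, (g i)^2 * w i) := by
  set A := ∑ i, (f i)^2 * w i with hAdef
  set B := ∑ i, (g i)^2 * w i with hBdef
  have hA : 0 ≤ A := Finset.sum_nonneg fun i _ => mul_nonneg (sq_nonneg _) (hw i)
  have hB : 0 ≤ B := Finset.sum_nonneg fun i _ => mul_nonneg (sq_nonneg _) (hw i)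
  have hCS : (∑ i, f i * g i * w i) ≤ Real.sqrt A * Real.sqrt B := by
    have h1 : (∑ i, f i * g i * w i) =
        ∑ i, (f i * Real.sqrt (w i)) * (g i * Real.sqrt (w i)) := by
      refine Finset.sum_congr rfl fun i _ => ?_
      rw [mul_mul_mul_comm, Real.mul_self_sqrt (hw i)]
    have h2 := Finset.sum_mul_sq_le_sq_mul_sq Finset.univ
      (fun i => f i * Real.sqrt (w i)) (fun i => g i * Real.sqrt (w i))
    have h3 : ∑ i, (f i * Real.sqrt (w i))^2 = A := by
      refine Finset.sum_congr rfl fun i _ => ?_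
      rw [mul_pow, Real.sq_sqrt (hw i)]
    have h4 : ∑ i, (g i * Real.sqrt (w i))^2 = B := by
      refine Finset.sum_congr rfl fun i _ => ?_
      rw [mul_pow, Real.sq_sqrt (hw i)]
    rw [h3, h4] at h2
    calc (∑ i, f i * g i * w i)
        ≤ |∑ i, (f i * Real.sqrt (w i)) * (g i * Real.sqrt (w i))| := h1 ▸ le_abs_self _
      _ = Real.sqrt ((∑ i, (f i * Real.sqrt (w i)) * (g i * Real.sqrt (w i)))^2) :=
          (Real.sqrt_sq_eq_abs _).symm
      _ ≤ Real.sqrt (A * B) := Real.sqrt_le_sqrt h2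
      _ = Real.sqrt A * Real.sqrt B := Real.sqrt_mul hA B
  have key : ∑ i, (f i + g i)^2 * w i ≤ (Real.sqrt A + Real.sqrt B)^2 := by
    have expand : ∑ i, (f i + g i)^2 * w i = A + 2 * (∑ i, f i * g i * w i) + B := by
      rw [hAdef, hBdef, Finset.mul_sum, ← Finset.sum_add_distrib, ← Finset.sum_add_distrib]
      refine Finset.sum_congr rfl fun i _ => by ring
    have e2 : (Real.sqrt A + Real.sqrt B)^2
        = A + 2 * (Real.sqrt A * Real.sqrt B) + B := by
      rw [add_sq, Real.sq_sqrt hA, Real.sq_sqrt hB]; ring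
    rw [expand, e2]; linarith
  calc Real.sqrt (∑ i, (f i + g i)^2 * w i)
      ≤ Real.sqrt ((Real.sqrt A + Real.sqrt B)^2) := Real.sqrt_le_sqrt key
    _ = Real.sqrt A + Real.sqrt B := Real.sqrt_sq (by positivity)

section helpers
variable {α β γ : Type*} [Fintype α] [Fintype β] [Fintype γ]

lemma sum_out_3 (P : α × β × γ → ℝ) (Q : α → β → ℝ)
    (hQ : ∀ x y, ∑ z, P (x, y, z) = Q x y) (G : α → β → ℝ) :
    ∑ t : α × β × γ, G t.1 t.2.1 * P t = ∑ x, ∑ y, G x y * Q x y := by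
  simp only [Fintype.sum_prod_type]
  refine Finset.sum_congr rfl fun x _ => Finset.sum_congr rfl fun y _ => ?_
  rw [← Finset.mul_sum, hQ]

lemma sum_out_1 (P : α × β × γ → ℝ) (Q : β → γ → ℝ)
    (hQ : ∀ y z, ∑ x, P (x, y, z) = Q y z) (G : β → γ → ℝ) :
    ∑ t : α × β × γ, G t.2.1 t.2.2 * P t = ∑ y, ∑ z, G y z * Q y z := by
  simp only [Fintype.sum_prod_type]
  rw [Finset.sum_comm]
  refine Finset.sum_congr rfl fun y _ => ?_
  rw [Finset.sum_comm]
  refine Finset.sum_congr rfl fun z _ => ?_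
  rw [← Finset.mul_sum, hQ]

lemma sum_out_2 (P : α × β × γ → ℝ) (Q : α → γ → ℝ)
    (hQ : ∀ x z, ∑ y, P (x, y, z) = Q x z) (G : α → γ → ℝ) :
    ∑ t : α × β × γ, G t.1 t.2.2 * P t = ∑ x, ∑ z, G x z * Q x z := by
  simp only [Fintype.sum_prod_type]
  refine Finset.sum_congr rfl fun x _ => ?_
  rw [Finset.sum_comm]
  refine Finset.sum_congr rfl fun z _ => ?_
  rw [← Finset.mul_sum, hQ]

lemma double_out_3 (P : α × β × γ → ℝ) (Q : α → β → ℝ)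
    (hQ : ∀ x y, ∑ z, P (x, y, z) = Q x y) (A : α → α → β → β → ℝ) :
    ∑ i : (α × β × γ) × (α × β × γ), A i.1.1 i.2.1 i.1.2.1 i.2.2.1 * (P i.1 * P i.2)
      = ∑ x, ∑ y, ∑ x', ∑ y', A x x' y y' * Q x y * Q x' y' := by
  rw [Fintype.sum_prod_type]
  have h1 : ∀ s : α × β × γ, ∑ t : α × β × γ, A s.1 t.1 s.2.1 t.2.1 * (P s * P t)
      = (∑ x', ∑ y', A s.1 x' s.2.1 y' * Q x' y') * P s := by
    intro s
    rw [show (∑ t : α × β × γ, A s.1 t.1 s.2.1 t.2.1 * (P s * P t))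
        = ∑ t : α × β × γ, (A s.1 t.1 s.2.1 t.2.1 * P s) * P t from
        Finset.sum_congr rfl fun t _ => by ring,
      sum_out_3 P Q hQ (fun x' y' => A s.1 x' s.2.1 y' * P s), Finset.sum_mul]
    exact Finset.sum_congr rfl fun x' _ => by
      rw [Finset.sum_mul]; exact Finset.sum_congr rfl fun y' _ => by ring
  calc ∑ s : α × β × γ, ∑ t : α × β × γ, A s.1 t.1 s.2.1 t.2.1 * (P s * P t)
      = ∑ s : α × β × γ, (fun x y => ∑ x', ∑ y', A x x' y y' * Q x' y') s.1 s.2.1 * P s :=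
        Finset.sum_congr rfl fun s _ => h1 s
    _ = ∑ x, ∑ y, (∑ x', ∑ y', A x x' y y' * Q x' y') * Q x y := by exact sum_out_3 P Q hQ fun x y => ∑ x', ∑ y', A x x' y y' * Q x' y'
    _ = ∑ x, ∑ y, ∑ x', ∑ y', A x x' y y' * Q x y * Q x' y' := by
        refine Finset.sum_congr rfl fun x _ => Finset.sum_congr rfl fun y _ => ?_
        rw [Finset.sum_mul]
        exact Finset.sum_congr rfl fun x' _ => by
          rw [Finset.sum_mul]; exact Finset.sum_congr rfl fun y' _ => by ring

lemma double_out_1 (P : α × β × γ → ℝ) (Q : β → γ → ℝ)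
    (hQ : ∀ y z, ∑ x, P (x, y, z) = Q y z) (A : β → β → γ → γ → ℝ) :
    ∑ i : (α × β × γ) × (α × β × γ), A i.1.2.1 i.2.2.1 i.1.2.2 i.2.2.2 * (P i.1 * P i.2)
      = ∑ y, ∑ z, ∑ y', ∑ z', A y y' z z' * Q y z * Q y' z' := by
  rw [Fintype.sum_prod_type]
  have h1 : ∀ s : α × β × γ, ∑ t : α × β × γ, A s.2.1 t.2.1 s.2.2 t.2.2 * (P s * P t)
      = (∑ y', ∑ z', A s.2.1 y' s.2.2 z' * Q y' z') * P s := by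
    intro s
    rw [show (∑ t : α × β × γ, A s.2.1 t.2.1 s.2.2 t.2.2 * (P s * P t))
        = ∑ t : α × β × γ, (A s.2.1 t.2.1 s.2.2 t.2.2 * P s) * P t from
        Finset.sum_congr rfl fun t _ => by ring,
      sum_out_1 P Q hQ (fun y' z' => A s.2.1 y' s.2.2 z' * P s), Finset.sum_mul]
    exact Finset.sum_congr rfl fun y' _ => by
      rw [Finset.sum_mul]; exact Finset.sum_congr rfl fun z' _ => by ring
  calc ∑ s : α × β × γ, ∑ t : α × β × γ, A s.2.1 t.2.1 s.2.2 t.2.2 * (P s * P t)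
      = ∑ s : α × β × γ, (fun y z => ∑ y', ∑ z', A y y' z z' * Q y' z') s.2.1 s.2.2 * P s :=
        Finset.sum_congr rfl fun s _ => h1 s
    _ = ∑ y, ∑ z, (∑ y', ∑ z', A y y' z z' * Q y' z') * Q y z := by exact sum_out_1 P Q hQ fun y z => ∑ y', ∑ z', A y y' z z' * Q y' z'
    _ = ∑ y, ∑ z, ∑ y', ∑ z', A y y' z z' * Q y z * Q y' z' := by
        refine Finset.sum_congr rfl fun y _ => Finset.sum_congr rfl fun z _ => ?_
        rw [Finset.sum_mul]
        exact Finset.sum_congr rfl fun y' _ => by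
          rw [Finset.sum_mul]; exact Finset.sum_congr rfl fun z' _ => by ring

lemma double_out_2 (P : α × β × γ → ℝ) (Q : α → γ → ℝ)
    (hQ : ∀ x z, ∑ y, P (x, y, z) = Q x z) (A : α → α → γ → γ → ℝ) :
    ∑ i : (α × β × γ) × (α × β × γ), A i.1.1 i.2.1 i.1.2.2 i.2.2.2 * (P i.1 * P i.2)
      = ∑ x, ∑ z, ∑ x', ∑ z', A x x' z z' * Q x z * Q x' z' := by
  rw [Fintype.sum_prod_type]
  have h1 : ∀ s : α × β × γ, ∑ t : α × β × γ, A s.1 t.1 s.2.2 t.2.2 * (P s * P t)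
      = (∑ x', ∑ z', A s.1 x' s.2.2 z' * Q x' z') * P s := by
    intro s
    rw [show (∑ t : α × β × γ, A s.1 t.1 s.2.2 t.2.2 * (P s * P t))
        = ∑ t : α × β × γ, (A s.1 t.1 s.2.2 t.2.2 * P s) * P t from
        Finset.sum_congr rfl fun t _ => by ring,
      sum_out_2 P Q hQ (fun x' z' => A s.1 x' s.2.2 z' * P s), Finset.sum_mul]
    exact Finset.sum_congr rfl fun x' _ => by
      rw [Finset.sum_mul]; exact Finset.sum_congr rfl fun z' _ => by ring
  calc ∑ s : α × β × γ, ∑ t : α × β × γ, A s.1 t.1 s.2.2 t.2.2 * (P s * P t)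
      = ∑ s : α × β × γ, (fun x z => ∑ x', ∑ z', A x x' z z' * Q x' z') s.1 s.2.2 * P s :=
        Finset.sum_congr rfl fun s _ => h1 s
    _ = ∑ x, ∑ z, (∑ x', ∑ z', A x x' z z' * Q x' z') * Q x z := by exact sum_out_2 P Q hQ fun x z => ∑ x', ∑ z', A x x' z z' * Q x' z'
    _ = ∑ x, ∑ z, ∑ x', ∑ z', A x x' z z' * Q x z * Q x' z' := by
        refine Finset.sum_congr rfl fun x _ => Finset.sum_congr rfl fun z _ => ?_
        rw [Finset.sum_mul]
        exact Finset.sum_congr rfl fun x' _ => by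
          rw [Finset.sum_mul]; exact Finset.sum_congr rfl fun z' _ => by ring

lemma swap_mid {δ1 δ2 δ3 δ4 : Type*} [Fintype δ1] [Fintype δ2] [Fintype δ3] [Fintype δ4]
    (F : δ1 → δ2 → δ3 → δ4 → ℝ) :
    ∑ a, ∑ b, ∑ c, ∑ d, F a b c d = ∑ a, ∑ c, ∑ b, ∑ d, F a b c d :=
  Finset.sum_congr rfl fun a _ => Finset.sum_comm

end helpers
/-- The Gromov–Wasserstein distance on finite measure networks satisfies the
triangle inequality: `d(X, Z) ≤ d(X, Y) + d(Y, Z)`. -/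
theorem gw_triangle_inequality {α β γ : Type*} [Fintype α] [Fintype β] [Fintype γ]
    (ωX : α → α → ℝ) (μX : α → ℝ)
    (ωY : β → β → ℝ) (μY : β → ℝ)
    (ωZ : γ → γ → ℝ) (μZ : γ → ℝ)
    (hμX0 : ∀ x, 0 < μX x) (hμX1 : ∑ x, μX x = 1)
    (hμY0 : ∀ y, 0 < μY y) (hμY1 : ∑ y, μY y = 1)
    (hμZ0 : ∀ z, 0 < μZ z) (hμZ1 : ∑ z, μZ z = 1) :
    GW ωX μX ωZ μZ ≤ GW ωX μX ωY μY + GW ωY μY ωZ μZ := by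
  classical
  have hne1 : {r | ∃ C, IsCoupling μX μY C ∧ r = Real.sqrt (disSq ωX ωY C)}.Nonempty :=
    ⟨_, ⟨fun x y => μX x * μY y,
      ⟨fun x y => le_of_lt (mul_pos (hμX0 x) (hμY0 y)),
       fun x => by rw [← Finset.mul_sum, hμY1, mul_one],
       fun y => by rw [← Finset.sum_mul, hμX1, one_mul]⟩, rfl⟩⟩
  have hne2 : {r | ∃ C, IsCoupling μY μZ C ∧ r = Real.sqrt (disSq ωY ωZ C)}.Nonempty :=
    ⟨_, ⟨fun y z => μY y * μZ z,
      ⟨fun y z => le_of_lt (mul_pos (hμY0 y) (hμZ0 z)),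
       fun y => by rw [← Finset.mul_sum, hμZ1, mul_one],
       fun z => by rw [← Finset.sum_mul, hμY1, one_mul]⟩, rfl⟩⟩
  have hbdd3 : BddBelow {r | ∃ C, IsCoupling μX μZ C ∧ r = Real.sqrt (disSq ωX ωZ C)} := by
    refine ⟨0, fun r hr => ?_⟩
    obtain ⟨C, _, rfl⟩ := hr
    exact Real.sqrt_nonneg _
  have key : sInf {r | ∃ C, IsCoupling μX μZ C ∧ r = Real.sqrt (disSq ωX ωZ C)} ≤
      sInf {r | ∃ C, IsCoupling μX μY C ∧ r = Real.sqrt (disSq ωX ωY C)} +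
      sInf {r | ∃ C, IsCoupling μY μZ C ∧ r = Real.sqrt (disSq ωY ωZ C)} := by
    refine le_of_forall_pos_le_add fun ε hε => ?_
    obtain ⟨r1, hr1mem, hr1⟩ := Real.lt_sInf_add_pos hne1 (half_pos hε)
    obtain ⟨C1, hC1, rfl⟩ := hr1mem
    obtain ⟨r2, hr2mem, hr2⟩ := Real.lt_sInf_add_pos hne2 (half_pos hε)
    obtain ⟨C2, hC2, rfl⟩ := hr2mem
    set P : α × β × γ → ℝ := fun t => C1 t.1 t.2.1 * C2 t.2.1 t.2.2 / μY t.2.1 with hPdef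
    set ν : α → γ → ℝ := fun x z => ∑ y, P (x, y, z) with hνdef
    have hQ1 : ∀ x y, ∑ z, P (x, y, z) = C1 x y := fun x y => by
      simp only [hPdef]
      rw [← Finset.sum_div, ← Finset.mul_sum, hC2.2.1 y, mul_div_assoc,
        div_self (hμY0 y).ne', mul_one]
    have hQ2 : ∀ y z, ∑ x, P (x, y, z) = C2 y z := fun y z => by
      simp only [hPdef]
      rw [← Finset.sum_div, ← Finset.sum_mul, hC1.2.2 y, mul_comm, mul_div_assoc,
        div_self (hμY0 y).ne', mul_one]
    have hQ3 : ∀ x z, ∑ y, P (x, y, z) = ν x z := fun x z => rfl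
    have hP0 : ∀ t, 0 ≤ P t :=
      fun t => div_nonneg (mul_nonneg (hC1.1 _ _) (hC2.1 _ _)) (hμY0 _).le
    have hνc : IsCoupling μX μZ ν := by
      refine ⟨fun x z => Finset.sum_nonneg fun y _ => hP0 _, fun x => ?_, fun z => ?_⟩
      · calc ∑ z, ν x z = ∑ z, ∑ y, P (x, y, z) := rfl
          _ = ∑ y, ∑ z, P (x, y, z) := Finset.sum_comm
          _ = ∑ y, C1 x y := Finset.sum_congr rfl fun y _ => hQ1 x y
          _ = μX x := hC1.2.1 x
      · calc ∑ x, ν x z = ∑ x, ∑ y, P (x, y, z) := rfl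
          _ = ∑ y, ∑ x, P (x, y, z) := Finset.sum_comm
          _ = ∑ y, C2 y z := Finset.sum_congr rfl fun y _ => hQ2 y z
          _ = μZ z := hC2.2.2 z
    have I1 : ∑ i : (α × β × γ) × (α × β × γ),
        (ωX i.1.1 i.2.1 - ωY i.1.2.1 i.2.2.1)^2 * (P i.1 * P i.2) = disSq ωX ωY C1 :=
      calc ∑ i : (α × β × γ) × (α × β × γ),
          (ωX i.1.1 i.2.1 - ωY i.1.2.1 i.2.2.1)^2 * (P i.1 * P i.2)
          = ∑ x, ∑ y, ∑ x', ∑ y', (ωX x x' - ωY y y')^2 * C1 x y * C1 x' y' := by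
            exact double_out_3 P C1 hQ1 fun x x' y y' => (ωX x x' - ωY y y')^2
        _ = disSq ωX ωY C1 := by
            rw [disSq]
            exact swap_mid fun x y x' y' => (ωX x x' - ωY y y')^2 * C1 x y * C1 x' y'
    have I2 : ∑ i : (α × β × γ) × (α × β × γ),
        (ωY i.1.2.1 i.2.2.1 - ωZ i.1.2.2 i.2.2.2)^2 * (P i.1 * P i.2) = disSq ωY ωZ C2 :=
      calc ∑ i : (α × β × γ) × (α × β × γ),
          (ωY i.1.2.1 i.2.2.1 - ωZ i.1.2.2 i.2.2.2)^2 * (P i.1 * P i.2)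
          = ∑ y, ∑ z, ∑ y', ∑ z', (ωY y y' - ωZ z z')^2 * C2 y z * C2 y' z' := by
            exact double_out_1 P C2 hQ2 fun y y' z z' => (ωY y y' - ωZ z z')^2
        _ = disSq ωY ωZ C2 := by
            rw [disSq]
            exact swap_mid fun y z y' z' => (ωY y y' - ωZ z z')^2 * C2 y z * C2 y' z'
    have I3 : ∑ i : (α × β × γ) × (α × β × γ),
        (ωX i.1.1 i.2.1 - ωZ i.1.2.2 i.2.2.2)^2 * (P i.1 * P i.2) = disSq ωX ωZ ν :=
      calc ∑ i : (α × β × γ) × (α × β × γ),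
          (ωX i.1.1 i.2.1 - ωZ i.1.2.2 i.2.2.2)^2 * (P i.1 * P i.2)
          = ∑ x, ∑ z, ∑ x', ∑ z', (ωX x x' - ωZ z z')^2 * ν x z * ν x' z' := by
            exact double_out_2 P ν hQ3 fun x x' z z' => (ωX x x' - ωZ z z')^2
        _ = disSq ωX ωZ ν := by
            rw [disSq]
            exact swap_mid fun x z x' z' => (ωX x x' - ωZ z z')^2 * ν x z * ν x' z'
    have mink := minkowski_sq (ι := (α × β × γ) × (α × β × γ))
      (fun i => ωX i.1.1 i.2.1 - ωY i.1.2.1 i.2.2.1)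
      (fun i => ωY i.1.2.1 i.2.2.1 - ωZ i.1.2.2 i.2.2.2)
      (fun i => P i.1 * P i.2)
      (fun i => mul_nonneg (hP0 _) (hP0 _))
    have hsum : ∑ i : (α × β × γ) × (α × β × γ),
        ((ωX i.1.1 i.2.1 - ωY i.1.2.1 i.2.2.1) + (ωY i.1.2.1 i.2.2.1 - ωZ i.1.2.2 i.2.2.2))^2
          * (P i.1 * P i.2)
        = ∑ i : (α × β × γ) × (α × β × γ),
        (ωX i.1.1 i.2.1 - ωZ i.1.2.2 i.2.2.2)^2 * (P i.1 * P i.2) :=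
      Finset.sum_congr rfl fun i _ => by ring
    rw [hsum, I1, I2, I3] at mink
    have hmem : Real.sqrt (disSq ωX ωZ ν) ∈
        {r | ∃ C, IsCoupling μX μZ C ∧ r = Real.sqrt (disSq ωX ωZ C)} := ⟨ν, hνc, rfl⟩
    have h0 := csInf_le hbdd3 hmem
    linarith
  simp only [GW]
  linarith
end
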